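/- Let d ≥ 1, let N ≥ 1 and 1 ≤ A ≤ N be real numbers, and let Q := (−A/2,A/2)^d ⊂ ℝ^d. Then for all ξ ∈ 2Ne₁ + 2Q and all η ∈ Ne₁ + Q, the wave phase φ⁽²⁾(ξ,η) := |ξ| − |η|² + |η−ξ|² satisfies |φ⁽²⁾(ξ,η)| ≤ 9 d N A. -/

import Mathlib

lemma norm_le_sqrt_mul (d : ℕ) (c : ℝ) (hc : 0 ≤ c) (x : EuclideanSpace ℝ (Fin d))
    (hx : ∀ i, |x i| ≤ c) : ‖x‖ ≤ Real.sqrt d * c := by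
  rw [EuclideanSpace.norm_eq]
  simp only [Real.norm_eq_abs, sq_abs]
  have : ∑ i : Fin d, x i ^ 2 ≤ ∑ _i : Fin d, c ^ 2 := by
    apply Finset.sum_le_sum
    intro i _
    have := hx i
    nlinarith [abs_nonneg (x i), sq_abs (x i)]
  calc Real.sqrt (∑ i : Fin d, x i ^ 2) ≤ Real.sqrt (∑ _i : Fin d, c ^ 2) :=
        Real.sqrt_le_sqrt this
    _ = Real.sqrt (d * c ^ 2) := by rw [Finset.sum_const, Finset.card_univ,
        Fintype.card_fin, nsmul_eq_mul]
    _ = Real.sqrt d * c := by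
        rw [Real.sqrt_mul (by positivity), Real.sqrt_sq hc]

lemma arith_aux (D N A s x y : ℝ) (hs1 : 1 ≤ s) (hs2 : s ^ 2 = D)
    (hN : 1 ≤ N) (hA : 1 ≤ A) (hAN : A ≤ N)
    (hx0 : 0 ≤ x) (hx : x ≤ 2 * N + s * A) (hy : y ≤ 2 * (s * A) * (2 * N + s * A)) :
    x + y ≤ 9 * D * N * A := by
  have hsD : s ≤ D := by nlinarith
  have hD1 : 1 ≤ D := le_trans hs1 hsD
  have hA0 : (0:ℝ) < A := by linarith
  have hN0 : (0:ℝ) < N := by linarith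
  have hDA : 1 ≤ D * A := by nlinarith [mul_le_mul hD1 hA zero_le_one (by linarith : (0:ℝ) ≤ D)]
  have e1 : 2 * N ≤ 2 * D * N * A := by nlinarith [mul_le_mul_of_nonneg_left hDA hN0.le]
  have e2 : s * A ≤ D * N * A := by
    nlinarith [mul_le_mul hsD (le_mul_of_one_le_left hA0.le hN) hA0.le (by linarith : (0:ℝ) ≤ D)]
  have e3 : 4 * (s * A) * N ≤ 4 * D * N * A := by
    nlinarith [mul_le_mul_of_nonneg_right (mul_le_mul_of_nonneg_right hsD hA0.le) hN0.le]
  have e4 : 2 * (s * A) * (s * A) ≤ 2 * D * N * A := by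
    have h1 : A * A ≤ N * A := mul_le_mul_of_nonneg_right hAN hA0.le
    nlinarith [mul_le_mul_of_nonneg_left h1 (by linarith : (0:ℝ) ≤ 2 * D)]
  nlinarith

theorem statement_12 (d : ℕ) (hd : 0 < d) (N A : ℝ) (hN : 1 ≤ N) (hA : 1 ≤ A)
    (hAN : A ≤ N) (ξ η : EuclideanSpace ℝ (Fin d))
    (hξ : ∀ i, |(ξ - (2 * N) • EuclideanSpace.single (⟨0, hd⟩ : Fin d) (1 : ℝ)) i| < A)
    (hη : ∀ i, |(η - N • EuclideanSpace.single (⟨0, hd⟩ : Fin d) (1 : ℝ)) i| < A / 2) :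
    |‖ξ‖ - ‖η‖ ^ 2 + ‖η - ξ‖ ^ 2| ≤ 9 * d * N * A := by
  set e : EuclideanSpace ℝ (Fin d) := EuclideanSpace.single (⟨0, hd⟩ : Fin d) (1 : ℝ) with he
  set u : EuclideanSpace ℝ (Fin d) := ξ - (2 * N) • e with hu
  set v : EuclideanSpace ℝ (Fin d) := η - N • e with hv
  have hnu : ‖u‖ ≤ Real.sqrt d * A :=
    norm_le_sqrt_mul d A (by linarith) u (fun i => (hξ i).le)
  have hnv : ‖v‖ ≤ Real.sqrt d * (A / 2) :=
    norm_le_sqrt_mul d (A / 2) (by linarith) v (fun i => (hη i).le)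
  have hne : ‖e‖ = 1 := by
    rw [he, EuclideanSpace.norm_single]; norm_num
  have hs1 : (1 : ℝ) ≤ Real.sqrt d := by
    rw [show (1:ℝ) = Real.sqrt 1 by simp]
    exact Real.sqrt_le_sqrt (by exact_mod_cast hd)
  have hs2 : Real.sqrt d ^ 2 = d := Real.sq_sqrt (by positivity)
  -- key identity
  have key : ‖η - ξ‖ ^ 2 - ‖η‖ ^ 2 = inner ℝ (u - 2 • v) ξ := by
    have h1 : ‖η - ξ‖ ^ 2 = ‖η‖ ^ 2 - 2 * inner ℝ η ξ + ‖ξ‖ ^ 2 :=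
      norm_sub_sq_real η ξ
    have h2 : (ξ : EuclideanSpace ℝ (Fin d)) - 2 • η = u - 2 • v := by
      rw [hu, hv]
      module
    have h3 : (inner ℝ (ξ - 2 • η) ξ : ℝ) = ‖ξ‖ ^ 2 - 2 * inner ℝ η ξ := by
      rw [inner_sub_left, two_smul, inner_add_left, real_inner_self_eq_norm_sq]
      ring
    rw [← h2, h3]
    linarith
  have habs : |‖ξ‖ - ‖η‖ ^ 2 + ‖η - ξ‖ ^ 2| ≤ ‖ξ‖ + ‖u - 2 • v‖ * ‖ξ‖ := by
    have hi : |(inner ℝ (u - 2 • v) ξ : ℝ)| ≤ ‖u - 2 • v‖ * ‖ξ‖ := abs_real_inner_le_norm _ _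
    have : ‖ξ‖ - ‖η‖ ^ 2 + ‖η - ξ‖ ^ 2 = ‖ξ‖ + inner ℝ (u - 2 • v) ξ := by
      rw [← key]; ring
    rw [this]
    calc |‖ξ‖ + (inner ℝ (u - 2 • v) ξ : ℝ)| ≤ |‖ξ‖| + |(inner ℝ (u - 2 • v) ξ : ℝ)| :=
          abs_add_le _ _
      _ ≤ ‖ξ‖ + ‖u - 2 • v‖ * ‖ξ‖ := by
          rw [abs_of_nonneg (norm_nonneg _)]; linarith
  have hnξ : ‖ξ‖ ≤ 2 * N + Real.sqrt d * A := by
    have : ξ = u + (2 * N) • e := by rw [hu]; module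
    rw [this]
    calc ‖u + (2 * N) • e‖ ≤ ‖u‖ + ‖(2 * N) • e‖ := norm_add_le _ _
      _ ≤ Real.sqrt d * A + 2 * N := by
          rw [norm_smul, hne, mul_one, Real.norm_eq_abs, abs_of_nonneg (by linarith)]
          linarith
      _ = 2 * N + Real.sqrt d * A := by ring
  have hnuv : ‖u - 2 • v‖ ≤ 2 * (Real.sqrt d * A) := by
    calc ‖u - 2 • v‖ ≤ ‖u‖ + ‖(2:ℝ) • v‖ := by
          rw [show (2:ℕ) • v = (2:ℝ) • v by module]; exact norm_sub_le _ _
      _ ≤ Real.sqrt d * A + 2 * (Real.sqrt d * (A/2)) := by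
          rw [norm_smul, Real.norm_eq_abs]
          have : |(2:ℝ)| = 2 := by norm_num
          rw [this]
          linarith
      _ = 2 * (Real.sqrt d * A) := by ring
  have hξ0 : (0:ℝ) ≤ ‖ξ‖ := norm_nonneg _
  have : ‖ξ‖ + ‖u - 2 • v‖ * ‖ξ‖ ≤ 9 * d * N * A := by
    have hb : ‖u - 2 • v‖ * ‖ξ‖ ≤ 2 * (Real.sqrt d * A) * (2 * N + Real.sqrt d * A) :=
      mul_le_mul hnuv hnξ hξ0 (by positivity)
    exact arith_aux d N A (Real.sqrt d) ‖ξ‖ (‖u - 2 • v‖ * ‖ξ‖) hs1 hs2 hN hA hAN hξ0 hnξ hb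
  linarith
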